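/- Let d be a positive integer, r ≥ 1 a real number, and O ⊆ ℝ^d a measurable set equipped with Lebesgue measure. If y, z : O → ℝ^d are a.e.-strongly measurable and ∫_O |y|^{r+1} dx < ∞ and ∫_O |z|^{r+1} dx < ∞, then ∫_O ⟨|y(x)|^{r−1}y(x) − |z(x)|^{r−1}z(x), y(x) − z(x)⟩ dx ≥ 2^{1−r}·∫_O |y(x) − z(x)|^{r+1} dx = 2^{1−r}·‖y − z‖_{L^{r+1}}^{r+1}. -/

import Mathlib

open MeasureTheory Real
open scoped RealInnerProductSpace ENNReal NNReal

lemma superadd {x y p : ℝ} (hx : 0 ≤ x) (hy : 0 ≤ y) (hp : 1 ≤ p) :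
    x ^ p + y ^ p ≤ (x + y) ^ p := by
  have h := NNReal.add_rpow_le_rpow_add x.toNNReal y.toNNReal hp
  have hx' : ((x.toNNReal : ℝ≥0) : ℝ) = x := Real.coe_toNNReal x hx
  have hy' : ((y.toNNReal : ℝ≥0) : ℝ) = y := Real.coe_toNNReal y hy
  have h2 := (NNReal.coe_le_coe).2 h
  push_cast at h2
  rwa [hx', hy'] at h2

lemma two_pow_bound {q s t : ℝ} (hq : 1 ≤ q) (hs : 0 ≤ s) (ht : 0 ≤ t) :
    (s + t) ^ q ≤ 2 ^ (q - 1) * (s ^ q + t ^ q) := by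
  have hc := (convexOn_rpow hq).2 (Set.mem_Ici.2 hs) (Set.mem_Ici.2 ht)
      (by norm_num : (0:ℝ) ≤ (1:ℝ)/2) (by norm_num : (0:ℝ) ≤ (1:ℝ)/2) (by norm_num)
  simp only [smul_eq_mul] at hc
  have h1 : (1/2 * s + 1/2 * t) = (s+t)/2 := by ring
  rw [h1] at hc
  have hm : (s + t) ^ q = ((s+t)/2) ^ q * 2 ^ q := by
    rw [← Real.mul_rpow (by linarith) (by norm_num)]
    norm_num
  have h3 : (0:ℝ) < 2 ^ q := Real.rpow_pos_of_pos (by norm_num) q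
  have h5 : (2:ℝ) ^ (q-1) = 2 ^ q / 2 := by
    rw [Real.rpow_sub (by norm_num : (0:ℝ) < 2), Real.rpow_one]
  calc (s+t)^q = ((s+t)/2)^q * 2^q := hm
    _ ≤ (1/2 * s^q + 1/2 * t^q) * 2^q := by
        exact mul_le_mul_of_nonneg_right hc h3.le
    _ = 2^(q-1) * (s^q + t^q) := by rw [h5]; ring

lemma sq_rpow_half {x p : ℝ} (hx : 0 ≤ x) : (x * x) ^ (p / 2) = x ^ p := by
  have h : x * x = x ^ (2:ℝ) := by rw [Real.rpow_two]; ring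
  rw [h, ← Real.rpow_mul hx, show (2:ℝ) * (p/2) = p by ring]

lemma rpow_succ {x r : ℝ} (hx : 0 ≤ x) (hr : 1 ≤ r) : x ^ (r - 1) * x = x ^ r := by
  nth_rewrite 2 [show r = (r - 1) + 1 by ring]
  rw [Real.rpow_add_one' hx (by linarith)]

lemma rpow_succ' {x r : ℝ} (hx : 0 ≤ x) (hr : 1 ≤ r) : x ^ r * x = x ^ (r + 1) := by
  rw [Real.rpow_add_one' hx (by linarith)]

-- endpoint 2, asymmetric version
lemma endpoint2 {s t r : ℝ} (ht : 0 ≤ t) (hts : t ≤ s) (hr : 1 ≤ r) :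
    2 ^ (1 - r) * (s - t) ^ (r + 1) ≤ (s ^ r - t ^ r) * (s - t) := by
  have hst : 0 ≤ s - t := by linarith
  have h1 : (s - t) ^ r + t ^ r ≤ s ^ r := by
    have := superadd hst ht hr
    rwa [sub_add_cancel] at this
  have h2 : (2:ℝ) ^ (1 - r) ≤ 1 :=
    Real.rpow_le_one_of_one_le_of_nonpos (by norm_num) (by linarith)
  have h3 : (0:ℝ) ≤ 2 ^ (1 - r) := Real.rpow_nonneg (by norm_num) _
  have h4 : (s - t) ^ (r + 1) = (s - t) ^ r * (s - t) := (rpow_succ' hst hr).symm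
  have h5 : 0 ≤ (s - t) ^ r := Real.rpow_nonneg hst _
  rw [h4]
  calc 2 ^ (1-r) * ((s-t)^r * (s-t)) ≤ 1 * ((s-t)^r * (s-t)) := by
        apply mul_le_mul_of_nonneg_right h2 (by positivity)
    _ = (s-t)^r * (s-t) := by ring
    _ ≤ (s^r - t^r) * (s-t) := mul_le_mul_of_nonneg_right (by linarith) hst

lemma key {E : Type*} [NormedAddCommGroup E] [InnerProductSpace ℝ E] {r : ℝ}
    (hr : 1 ≤ r) (a b : E) :
    2 ^ (1 - r) * ‖a - b‖ ^ (r + 1)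
      ≤ ⟪(‖a‖ ^ (r - 1)) • a - (‖b‖ ^ (r - 1)) • b, a - b⟫ := by
  set s := ‖a‖ with hs_def
  set t := ‖b‖ with ht_def
  set c := ⟪a, b⟫ with hc_def
  have hs : 0 ≤ s := norm_nonneg a
  have ht : 0 ≤ t := norm_nonneg b
  have hcle : |c| ≤ s * t := abs_real_inner_le_norm a b
  have hs1 : s ^ (r-1) * s = s ^ r := rpow_succ hs hr
  have ht1 : t ^ (r-1) * t = t ^ r := rpow_succ ht hr
  have hs2 : s ^ r * s = s ^ (r+1) := rpow_succ' hs hr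
  have ht2 : t ^ r * t = t ^ (r+1) := rpow_succ' ht hr
  -- expand the inner product
  have hD : ⟪(s ^ (r-1)) • a - (t ^ (r-1)) • b, a - b⟫
      = s ^ (r+1) + t ^ (r+1) - (s ^ (r-1) + t ^ (r-1)) * c := by
    rw [inner_sub_left, inner_sub_right, inner_sub_right, real_inner_smul_left,
      real_inner_smul_left, real_inner_smul_left, real_inner_smul_left,
      real_inner_self_eq_norm_mul_norm, real_inner_self_eq_norm_mul_norm]
    have hba : (inner ℝ b a : ℝ) = c := (real_inner_comm a b).trans hc_def.symm
    have hab : (inner ℝ a b : ℝ) = c := hc_def.symm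
    simp only [hba, hab, ← hs_def, ← ht_def]
    rw [← hs2, ← ht2, ← hs1, ← ht1]
    ring
  -- norm squared
  have hw2 : ‖a - b‖ * ‖a - b‖ = s*s + t*t - 2*c := by
    have h := @norm_sub_sq_real _ _ _ a b
    rw [sq, sq, sq] at h
    rw [h, ← hs_def, ← ht_def, ← hc_def]; ring
  -- convex combination representation
  obtain ⟨l, hl0, hl1, hwrep, hDrep⟩ : ∃ l : ℝ, 0 ≤ l ∧ l ≤ 1 ∧
      s*s + t*t - 2*c = l*((s+t)*(s+t)) + (1-l)*((s-t)*(s-t)) ∧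
      s^(r+1) + t^(r+1) - (s^(r-1)+t^(r-1))*c
        = l*((s^r+t^r)*(s+t)) + (1-l)*((s^r-t^r)*(s-t)) := by
    rcases eq_or_lt_of_le (mul_nonneg hs ht) with hst0 | hstpos
    · -- s*t = 0, hence c = 0 and s = 0 or t = 0
      have hc0 : c = 0 := by
        have : |c| ≤ 0 := by rw [← hst0] at hcle; exact hcle
        have := abs_nonneg c
        have : |c| = 0 := le_antisymm ‹|c| ≤ 0› this
        exact abs_eq_zero.mp this
      refine ⟨0, le_refl 0, by norm_num, ?_, ?_⟩
      · rw [hc0]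
        have : s * t = 0 := hst0.symm
        nlinarith [this]
      · rw [hc0]
        rcases mul_eq_zero.mp hst0.symm with h0 | h0
        · have hsr : s ^ r = 0 := by rw [h0]; exact Real.zero_rpow (by linarith)
          have hsr1 : s ^ (r+1) = 0 := by rw [h0]; exact Real.zero_rpow (by linarith)
          rw [hsr, hsr1, h0]
          linear_combination -ht2
        · have htr : t ^ r = 0 := by rw [h0]; exact Real.zero_rpow (by linarith)
          have htr1 : t ^ (r+1) = 0 := by rw [h0]; exact Real.zero_rpow (by linarith)
          rw [htr, htr1, h0]
          linear_combination -hs2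
    · refine ⟨(s*t - c)/(2*(s*t)), ?_, ?_, ?_, ?_⟩
      · apply div_nonneg _ (by linarith)
        have := (abs_le.mp hcle).2; linarith
      · rw [div_le_one (by linarith)]
        have := (abs_le.mp hcle).1; linarith
      · have hs0 : s ≠ 0 := by rintro h; simp [h] at hstpos
        have ht0 : t ≠ 0 := by rintro h; simp [h] at hstpos
        field_simp
        ring
      · rw [← hs2, ← ht2, ← hs1, ← ht1]
        have hs0 : s ≠ 0 := by rintro h; simp [h] at hstpos
        have ht0 : t ≠ 0 := by rintro h; simp [h] at hstpos
        field_simp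
        ring
  have h2nn : (0:ℝ) ≤ 2 ^ (1 - r) := Real.rpow_nonneg (by norm_num) _
  have hstnn : 0 ≤ s + t := add_nonneg hs ht
  have hcvx := (convexOn_rpow (show (1:ℝ) ≤ (r+1)/2 by linarith)).2
      (Set.mem_Ici.2 (mul_nonneg hstnn hstnn))
      (Set.mem_Ici.2 (mul_self_nonneg (s - t))) hl0
      (show (0:ℝ) ≤ 1 - l by linarith) (by ring)
  simp only [smul_eq_mul] at hcvx
  have e1 : ((s+t)*(s+t)) ^ ((r+1)/2) = (s+t) ^ (r+1) := sq_rpow_half hstnn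
  have e2 : ((s-t)*(s-t)) ^ ((r+1)/2) = |s-t| ^ (r+1) := by
    rw [show (s-t)*(s-t) = |s-t| * |s-t| from (abs_mul_abs_self _).symm]
    exact sq_rpow_half (abs_nonneg _)
  rw [e1, e2] at hcvx
  have hEP1 : 2 ^ (1-r) * (s+t) ^ (r+1) ≤ (s^r + t^r) * (s+t) := by
    have hb := two_pow_bound hr hs ht
    have hsp : (s+t) ^ (r+1) = (s+t) ^ r * (s+t) := (rpow_succ' hstnn hr).symm
    have h2 : (2:ℝ) ^ (1-r) * 2 ^ (r-1) = 1 := by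
      rw [← Real.rpow_add (by norm_num : (0:ℝ) < 2)]; norm_num
    calc 2 ^ (1-r) * (s+t) ^ (r+1) = 2 ^ (1-r) * ((s+t) ^ r * (s+t)) := by rw [hsp]
      _ ≤ 2 ^ (1-r) * ((2 ^ (r-1) * (s^r + t^r)) * (s+t)) :=
          mul_le_mul_of_nonneg_left (mul_le_mul_of_nonneg_right hb hstnn) h2nn
      _ = (2 ^ (1-r) * 2 ^ (r-1)) * ((s^r + t^r) * (s+t)) := by ring
      _ = (s^r + t^r) * (s+t) := by rw [h2]; ring
  have hEP2 : 2 ^ (1-r) * |s-t| ^ (r+1) ≤ (s^r - t^r) * (s-t) := by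
    rcases le_total t s with h | h
    · rw [abs_of_nonneg (by linarith)]; exact endpoint2 ht h hr
    · rw [abs_of_nonpos (by linarith), show -(s-t) = t-s by ring,
        show (s^r - t^r) * (s-t) = (t^r - s^r) * (t-s) by ring]
      exact endpoint2 hs h hr
  have habr : ‖a-b‖ ^ (r+1) = (l*((s+t)*(s+t)) + (1-l)*((s-t)*(s-t))) ^ ((r+1)/2) := by
    rw [← hwrep, ← hw2, sq_rpow_half (norm_nonneg _)]
  calc 2 ^ (1-r) * ‖a-b‖ ^ (r+1)
      = 2 ^ (1-r) * (l*((s+t)*(s+t)) + (1-l)*((s-t)*(s-t))) ^ ((r+1)/2) := by rw [habr]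
    _ ≤ 2 ^ (1-r) * (l * (s+t) ^ (r+1) + (1-l) * |s-t| ^ (r+1)) :=
        mul_le_mul_of_nonneg_left hcvx h2nn
    _ = l * (2 ^ (1-r) * (s+t) ^ (r+1)) + (1-l) * (2 ^ (1-r) * |s-t| ^ (r+1)) := by ring
    _ ≤ l * ((s^r + t^r) * (s+t)) + (1-l) * ((s^r - t^r) * (s-t)) :=
        add_le_add (mul_le_mul_of_nonneg_left hEP1 hl0)
          (mul_le_mul_of_nonneg_left hEP2 (by linarith))
    _ = s ^ (r+1) + t ^ (r+1) - (s ^ (r-1) + t ^ (r-1)) * c := hDrep.symm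
    _ = ⟪(s ^ (r-1)) • a - (t ^ (r-1)) • b, a - b⟫ := hD.symm

lemma bound_scalar {s t r : ℝ} (hs : 0 ≤ s) (ht : 0 ≤ t) (hr : 1 ≤ r) :
    (s^r + t^r) * (s + t) ≤ 2^r * (s^(r+1) + t^(r+1)) := by
  have h1 : s^r + t^r ≤ (s+t)^r := superadd hs ht hr
  have h2 : (s+t)^(r+1) ≤ 2^(r+1-1) * (s^(r+1) + t^(r+1)) :=
    two_pow_bound (by linarith) hs ht
  rw [show r+1-1 = r by ring] at h2
  calc (s^r + t^r) * (s+t) ≤ (s+t)^r * (s+t) :=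
        mul_le_mul_of_nonneg_right h1 (add_nonneg hs ht)
    _ = (s+t)^(r+1) := rpow_succ' (add_nonneg hs ht) hr
    _ ≤ 2^r * (s^(r+1) + t^(r+1)) := h2

/-- For `r ≥ 1`, a measurable set `O ⊆ ℝ^d`, and a.e.-strongly measurable
`y z : O → ℝ^d` with `∫_O |y|^{r+1} < ∞` and `∫_O |z|^{r+1} < ∞`, one has
`∫_O ⟨|y|^{r-1}y - |z|^{r-1}z, y - z⟩ ≥ 2^{1-r} ∫_O |y - z|^{r+1} = 2^{1-r} ‖y-z‖_{L^{r+1}}^{r+1}`. -/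
theorem damping_strong_monotonicity_integral (d : ℕ) (hd : 0 < d) (r : ℝ) (hr : 1 ≤ r)
    (O : Set (EuclideanSpace ℝ (Fin d))) (hO : MeasurableSet O)
    (y z : EuclideanSpace ℝ (Fin d) → EuclideanSpace ℝ (Fin d))
    (hy : AEStronglyMeasurable y (volume.restrict O))
    (hz : AEStronglyMeasurable z (volume.restrict O))
    (hyint : ∫⁻ x in O, ENNReal.ofReal (‖y x‖ ^ (r + 1)) < ⊤)
    (hzint : ∫⁻ x in O, ENNReal.ofReal (‖z x‖ ^ (r + 1)) < ⊤) :
    (2 : ℝ) ^ (1 - r) * (∫ x in O, ‖y x - z x‖ ^ (r + 1))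
      ≤ ∫ x in O, ⟪(‖y x‖ ^ (r - 1)) • y x - (‖z x‖ ^ (r - 1)) • z x, y x - z x⟫ := by
  set μ := volume.restrict O with hμ
  have hcn : Continuous (fun v : ℝ => v ^ (r+1)) := Real.continuous_rpow_const (by linarith)
  -- integrability of the norm powers
  have hYmeas : AEStronglyMeasurable (fun x => ‖y x‖ ^ (r+1)) μ :=
    (hcn.comp continuous_norm).comp_aestronglyMeasurable hy
  have hZmeas : AEStronglyMeasurable (fun x => ‖z x‖ ^ (r+1)) μ :=
    (hcn.comp continuous_norm).comp_aestronglyMeasurable hz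
  have hYI : Integrable (fun x => ‖y x‖ ^ (r+1)) μ := by
    refine ⟨hYmeas, ?_⟩
    rw [hasFiniteIntegral_iff_ofReal
      (Filter.Eventually.of_forall fun x => Real.rpow_nonneg (norm_nonneg _) _)]
    exact hyint
  have hZI : Integrable (fun x => ‖z x‖ ^ (r+1)) μ := by
    refine ⟨hZmeas, ?_⟩
    rw [hasFiniteIntegral_iff_ofReal
      (Filter.Eventually.of_forall fun x => Real.rpow_nonneg (norm_nonneg _) _)]
    exact hzint
  have hB : Integrable (fun x => 2^r * (‖y x‖ ^ (r+1) + ‖z x‖ ^ (r+1))) μ :=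
    (hYI.add hZI).const_mul _
  -- integrability of g
  have hgmeas : AEStronglyMeasurable (fun x => ‖y x - z x‖ ^ (r+1)) μ :=
    (hcn.comp continuous_norm).comp_aestronglyMeasurable (hy.sub hz)
  have hgI : Integrable (fun x => ‖y x - z x‖ ^ (r+1)) μ := by
    refine Integrable.mono' hB hgmeas (Filter.Eventually.of_forall fun x => ?_)
    rw [Real.norm_eq_abs, abs_of_nonneg (Real.rpow_nonneg (norm_nonneg _) _)]
    calc ‖y x - z x‖ ^ (r+1) ≤ (‖y x‖ + ‖z x‖) ^ (r+1) :=
          Real.rpow_le_rpow (norm_nonneg _) (norm_sub_le _ _) (by linarith)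
      _ ≤ 2^(r+1-1) * (‖y x‖ ^ (r+1) + ‖z x‖ ^ (r+1)) :=
          two_pow_bound (by linarith) (norm_nonneg _) (norm_nonneg _)
      _ = 2^r * (‖y x‖ ^ (r+1) + ‖z x‖ ^ (r+1)) := by rw [show r+1-1 = r by ring]
  -- integrability of f
  have hcd : Continuous (fun v : EuclideanSpace ℝ (Fin d) => (‖v‖ ^ (r-1)) • v) :=
    ((Real.continuous_rpow_const (by linarith)).comp continuous_norm).smul continuous_id
  have hF1 : AEStronglyMeasurable (fun x => (‖y x‖ ^ (r-1)) • y x) μ :=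
    hcd.comp_aestronglyMeasurable hy
  have hF2 : AEStronglyMeasurable (fun x => (‖z x‖ ^ (r-1)) • z x) μ :=
    hcd.comp_aestronglyMeasurable hz
  have hfmeas : AEStronglyMeasurable
      (fun x => ⟪(‖y x‖ ^ (r-1)) • y x - (‖z x‖ ^ (r-1)) • z x, y x - z x⟫) μ :=
    (hF1.sub hF2).inner (hy.sub hz)
  have hfI : Integrable
      (fun x => ⟪(‖y x‖ ^ (r-1)) • y x - (‖z x‖ ^ (r-1)) • z x, y x - z x⟫) μ := by
    refine Integrable.mono' hB hfmeas (Filter.Eventually.of_forall fun x => ?_)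
    set s := ‖y x‖
    set t := ‖z x‖
    have hs : 0 ≤ s := norm_nonneg _
    have ht : 0 ≤ t := norm_nonneg _
    have h1 : ‖(‖y x‖ ^ (r-1)) • y x - (‖z x‖ ^ (r-1)) • z x‖ ≤ s^r + t^r := by
      refine (norm_sub_le _ _).trans ?_
      rw [norm_smul, norm_smul, Real.norm_eq_abs,
        abs_of_nonneg (Real.rpow_nonneg hs _), Real.norm_eq_abs,
        abs_of_nonneg (Real.rpow_nonneg ht _), rpow_succ hs hr, rpow_succ ht hr]
    have h2 : ‖y x - z x‖ ≤ s + t := norm_sub_le _ _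
    rw [Real.norm_eq_abs]
    calc |⟪(‖y x‖ ^ (r-1)) • y x - (‖z x‖ ^ (r-1)) • z x, y x - z x⟫|
        ≤ ‖(‖y x‖ ^ (r-1)) • y x - (‖z x‖ ^ (r-1)) • z x‖ * ‖y x - z x‖ :=
          abs_real_inner_le_norm _ _
      _ ≤ (s^r + t^r) * (s + t) := by
          apply mul_le_mul h1 h2 (norm_nonneg _)
          positivity
      _ ≤ 2^r * (s^(r+1) + t^(r+1)) := bound_scalar hs ht hr
  -- conclude
  rw [← MeasureTheory.integral_const_mul]
  exact integral_mono (hgI.const_mul _) hfI (fun x => key hr (y x) (z x))
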